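/- Let κ : ℝ → ℝ be continuous and bounded with finite nonzero limits κ₊ = lim_{x→+∞} κ(x) and κ₋ = lim_{x→−∞} κ(x), and suppose κ − κ₊ ∈ L¹([0,∞)) and κ − κ₋ ∈ L¹((−∞,0]). Let E ∈ ℝ with |E| < (3/2) min(|κ₊|, |κ₋|). Then the set of bounded C¹ solutions Ψ : ℝ → ℂ² of the Dirac eigenvalue equation 𝒟Ψ = EΨ (pointwise on ℝ) is a complex vector space of dimension at most one: any two bounded C¹ solutions Ψ₁, Ψ₂ are linearly dependent over ℂ. In particular, every eigenvalue of 𝒟 in the spectral gap (−(3/2)min(|κ₊|,|κ₋|), (3/2)min(|κ₊|,|κ₋|)) is simple. -/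

import Mathlib

noncomputable section

open Complex Real MeasureTheory Filter

/-- The pointwise Dirac eigenvalue equation `𝒟Ψ = EΨ`, where
`𝒟Ψ = (3/2)(−iσ₁Ψ′ + κσ₂Ψ)`. -/
def DiracEq (κ : ℝ → ℝ) (E : ℝ) (Ψ : ℝ → ℂ × ℂ) : Prop :=
  ∀ x : ℝ,
    (3 / 2 : ℂ) * (-I * deriv (fun y => (Ψ y).2) x - I * ((κ x : ℝ) : ℂ) * (Ψ x).2)
      = (E : ℂ) * (Ψ x).1 ∧
    (3 / 2 : ℂ) * (-I * deriv (fun y => (Ψ y).1) x + I * ((κ x : ℝ) : ℂ) * (Ψ x).1)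
      = (E : ℂ) * (Ψ x).2

lemma expGrow {P : ℝ → ℝ} {c x₀ B : ℝ} (hP : Differentiable ℝ P)
    (h : ∀ x, x₀ ≤ x → c * P x ≤ deriv P x)
    (hbd : ∀ x, P x ≤ B) (hc : 0 < c) (hP0 : 0 < P x₀) : False := by
  have hg : ∀ x : ℝ, HasDerivAt (fun y => P y * Real.exp (-(c * y)))
      (deriv P x * Real.exp (-(c * x)) + P x * (Real.exp (-(c * x)) * -(c * 1))) x := by
    intro x
    exact (hP x).hasDerivAt.mul (((hasDerivAt_id x).const_mul c).neg.exp)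
  have mono : MonotoneOn (fun y => P y * Real.exp (-(c * y))) (Set.Ici x₀) := by
    apply monotoneOn_of_deriv_nonneg (convex_Ici x₀)
    · exact (hP.continuous.mul (Real.continuous_exp.comp (continuous_const.mul continuous_id).neg)).continuousOn
    · intro x hx
      exact (hg x).differentiableAt.differentiableWithinAt
    · intro x hx
      rw [interior_Ici] at hx
      rw [(hg x).deriv]
      have h1 := h x hx.le
      have h2 := Real.exp_pos (-(c * x))
      nlinarith
  have grow : ∀ x, x₀ ≤ x → P x₀ * Real.exp (c * (x - x₀)) ≤ P x := by
    intro x hx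
    have h1 := mono (Set.self_mem_Ici) hx hx
    simp only at h1
    have h2 := Real.exp_pos (-(c * x))
    rw [← mul_le_mul_iff_left₀ h2]
    calc P x₀ * Real.exp (c * (x - x₀)) * Real.exp (-(c * x))
        = P x₀ * Real.exp (-(c * x₀)) := by
          rw [mul_assoc, ← Real.exp_add]; ring_nf
      _ ≤ P x * Real.exp (-(c * x)) := h1
  -- find x with P x₀ * exp (c*(x-x₀)) > B
  have htt : Tendsto (fun x : ℝ => P x₀ * Real.exp (c * (x - x₀))) atTop atTop := by
    apply Tendsto.const_mul_atTop hP0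
    exact Real.tendsto_exp_atTop.comp ((tendsto_atTop_add_const_right atTop (-x₀) tendsto_id).congr (fun y => by simp; ring) |>.const_mul_atTop hc)
  obtain ⟨x, hx1, hx2⟩ := ((htt.eventually_gt_atTop B).and (eventually_ge_atTop x₀)).exists
  exact absurd (le_trans (grow x hx2) (hbd x)) (not_le.mpr hx1)

lemma vanish {N : ℝ → ℝ} {C x₀ : ℝ} (hN : Differentiable ℝ N)
    (hnn : ∀ x, 0 ≤ N x) (hd : ∀ x, |deriv N x| ≤ C * N x) (h0 : N x₀ = 0) :
    ∀ x, N x = 0 := by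
  have fwd : ∀ (M : ℝ → ℝ) (s : ℝ), Differentiable ℝ M → (∀ x, 0 ≤ M x) →
      (∀ x, |deriv M x| ≤ C * M x) → M s = 0 → ∀ x, s ≤ x → M x = 0 := by
    intro M s hM hMnn hMd hMs x hx
    have hg : ∀ y : ℝ, HasDerivAt (fun z => M z * Real.exp (-(C * z)))
        (deriv M y * Real.exp (-(C * y)) + M y * (Real.exp (-(C * y)) * -(C * 1))) y := by
      intro y
      exact (hM y).hasDerivAt.mul (((hasDerivAt_id y).const_mul C).neg.exp)
    have anti : AntitoneOn (fun z => M z * Real.exp (-(C * z))) (Set.Ici s) := by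
      apply antitoneOn_of_deriv_nonpos (convex_Ici s)
      · exact (hM.continuous.mul (Real.continuous_exp.comp (continuous_const.mul continuous_id).neg)).continuousOn
      · intro y hy
        exact (hg y).differentiableAt.differentiableWithinAt
      · intro y hy
        rw [(hg y).deriv]
        have h1 := (abs_le.mp (hMd y)).2
        have h2 := Real.exp_pos (-(C * y))
        nlinarith
    have h1 := anti (Set.self_mem_Ici) hx hx
    simp only [hMs, zero_mul] at h1
    have h2 := Real.exp_pos (-(C * x))
    have : M x ≤ 0 := by nlinarith
    exact le_antisymm this (hMnn x)
  intro x
  rcases le_total x₀ x with hx | hx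
  · exact fwd N x₀ hN hnn hd h0 x hx
  · -- reflect
    set M : ℝ → ℝ := fun y => N (2 * x₀ - y) with hMdef
    have hM : Differentiable ℝ M := hN.comp (by fun_prop)
    have hMd : ∀ y, deriv M y = -deriv N (2 * x₀ - y) := by
      intro y
      have hinner : HasDerivAt (fun z : ℝ => 2 * x₀ - z) (-1) y := by
        simpa using (hasDerivAt_id y).const_sub (2 * x₀)
      have := ((hN (2 * x₀ - y)).hasDerivAt.comp y hinner)
      have h2 := this.deriv
      simp only [Function.comp_def, mul_neg, mul_one] at h2
      rw [hMdef]; exact h2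
    have := fwd M x₀ hM (fun y => hnn _)
      (fun y => by rw [hMd]; simpa using hd (2 * x₀ - y))
      (by simp [hMdef]; ring_nf; simpa using h0) (2 * x₀ - x) (by linarith)
    simpa [hMdef] using this

lemma growth_contradiction (κ : ℝ → ℝ) (ω x₀ δ B : ℝ) (hδ : 0 < δ)
    (hκ : ∀ x, x₀ ≤ x → |ω| + δ ≤ κ x)
    (p q : ℝ → ℝ)
    (hp : ∀ x, HasDerivAt p (κ x * p x - ω * q x) x)
    (hq : ∀ x, HasDerivAt q (ω * p x - κ x * q x) x)
    (hbd : ∀ x, p x ^ 2 ≤ B)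
    (h0 : q x₀ ^ 2 < p x₀ ^ 2) : False := by
  have hP : ∀ x, HasDerivAt (fun x => p x ^ 2 - q x ^ 2)
      (2 * p x ^ 1 * (κ x * p x - ω * q x) - 2 * q x ^ 1 * (ω * p x - κ x * q x)) x := by
    intro x
    exact ((hp x).pow 2).sub ((hq x).pow 2)
  have hPdiff : Differentiable ℝ (fun x => p x ^ 2 - q x ^ 2) :=
    fun x => (hP x).differentiableAt
  refine expGrow (c := 2 * δ) (B := B) hPdiff ?_
    (fun x => by nlinarith [sq_nonneg (q x), hbd x]) (by linarith) (by simpa using h0)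
  intro x hx
  rw [(hP x).deriv]
  have h1 := hκ x hx
  have h2 := le_abs_self ω
  have h3 := neg_abs_le ω
  nlinarith [mul_nonneg (sq_nonneg (p x - q x)) (by linarith : (0:ℝ) ≤ |ω| + ω),
    mul_nonneg (sq_nonneg (p x + q x)) (by linarith : (0:ℝ) ≤ |ω| - ω),
    mul_nonneg (by linarith : (0:ℝ) ≤ κ x - (|ω| + δ))
      (by positivity : (0:ℝ) ≤ p x ^ 2 + q x ^ 2), sq_nonneg (q x), hδ.le]

lemma hasDerivAt_re {f : ℝ → ℂ} {f' : ℂ} {x : ℝ} (h : HasDerivAt f f' x) :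
    HasDerivAt (fun y => (f y).re) f'.re x :=
  Complex.reCLM.hasFDerivAt.comp_hasDerivAt x h

lemma hasDerivAt_im {f : ℝ → ℂ} {f' : ℂ} {x : ℝ} (h : HasDerivAt f f' x) :
    HasDerivAt (fun y => (f y).im) f'.im x :=
  Complex.imCLM.hasFDerivAt.comp_hasDerivAt x h

lemma dirac_unique (κ : ℝ → ℝ) (B ω x₀ : ℝ) (hB : ∀ x, |κ x| ≤ B)
    (u v : ℝ → ℂ)
    (hu : ∀ x, HasDerivAt u ((κ x : ℂ) * u x + I * (ω : ℂ) * v x) x)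
    (hv : ∀ x, HasDerivAt v (I * (ω : ℂ) * u x - (κ x : ℂ) * v x) x)
    (h0u : u x₀ = 0) (h0v : v x₀ = 0) : ∀ x, u x = 0 ∧ v x = 0 := by
  set N : ℝ → ℝ := fun x => (u x).re ^ 2 + (u x).im ^ 2 + ((v x).re ^ 2 + (v x).im ^ 2)
    with hNdef
  have hN : ∀ x, HasDerivAt N (2 * κ x *
      ((u x).re ^ 2 + (u x).im ^ 2 - (v x).re ^ 2 - (v x).im ^ 2)) x := by
    intro x
    have h1 := ((hasDerivAt_re (hu x)).pow 2).add ((hasDerivAt_im (hu x)).pow 2)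
    have h2 := ((hasDerivAt_re (hv x)).pow 2).add ((hasDerivAt_im (hv x)).pow 2)
    refine (h1.add h2).congr_deriv ?_
    simp [Complex.mul_re, Complex.mul_im]
    ring
  have hNz : ∀ x, N x = 0 := by
    apply vanish (C := 2 * B) (x₀ := x₀) (fun x => (hN x).differentiableAt)
      (fun x => by positivity)
    · intro x
      rw [(hN x).deriv]
      have h1 := abs_le.mp (hB x)
      have ha : (0:ℝ) ≤ (u x).re ^ 2 + (u x).im ^ 2 := by positivity
      have hb : (0:ℝ) ≤ (v x).re ^ 2 + (v x).im ^ 2 := by positivity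
      rw [abs_le]
      constructor <;>
      · simp only [hNdef]
        nlinarith [mul_nonneg (by linarith : (0:ℝ) ≤ B - κ x) ha,
          mul_nonneg (by linarith : (0:ℝ) ≤ B + κ x) ha,
          mul_nonneg (by linarith : (0:ℝ) ≤ B - κ x) hb,
          mul_nonneg (by linarith : (0:ℝ) ≤ B + κ x) hb]
    · simp [hNdef, h0u, h0v]
  intro x
  have hx := hNz x
  simp only [hNdef] at hx
  have sq0 : ∀ a b c d : ℝ, a ^ 2 + b ^ 2 + (c ^ 2 + d ^ 2) = 0 →
      a = 0 ∧ b = 0 ∧ c = 0 ∧ d = 0 := by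
    intro a b c d h
    refine ⟨?_, ?_, ?_, ?_⟩ <;>
    · rw [← pow_eq_zero_iff (n := 2) two_ne_zero]
      apply le_antisymm ?_ (sq_nonneg _)
      nlinarith [sq_nonneg a, sq_nonneg b, sq_nonneg c, sq_nonneg d]
  obtain ⟨e1, e2, e3, e4⟩ := sq0 _ _ _ _ hx
  exact ⟨Complex.ext (by simpa using e1) (by simpa using e2),
    Complex.ext (by simpa using e3) (by simpa using e4)⟩

lemma dirac_deriv (κ : ℝ → ℝ) (E : ℝ) (Ψ : ℝ → ℂ × ℂ) (hs : ContDiff ℝ 1 Ψ)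
    (heq : DiracEq κ E Ψ) (x : ℝ) :
    HasDerivAt (fun y => (Ψ y).1)
      ((κ x : ℂ) * (Ψ x).1 + I * ((2 * E / 3 : ℝ) : ℂ) * (Ψ x).2) x ∧
    HasDerivAt (fun y => (Ψ y).2)
      (I * ((2 * E / 3 : ℝ) : ℂ) * (Ψ x).1 - (κ x : ℂ) * (Ψ x).2) x := by
  have hd := hs.differentiable one_ne_zero
  have h1 : DifferentiableAt ℝ (fun y => (Ψ y).1) x := (hd x).fst
  have h2 : DifferentiableAt ℝ (fun y => (Ψ y).2) x := (hd x).snd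
  have e1 := (heq x).1
  have e2 := (heq x).2
  constructor
  · have : deriv (fun y => (Ψ y).1) x
        = (κ x : ℂ) * (Ψ x).1 + I * ((2 * E / 3 : ℝ) : ℂ) * (Ψ x).2 := by
      push_cast
      linear_combination (2 / 3 * I) * e2 +
        (deriv (fun y => (Ψ y).1) x - (κ x : ℂ) * (Ψ x).1) * Complex.I_sq
    exact this ▸ h1.hasDerivAt
  · have : deriv (fun y => (Ψ y).2) x
        = I * ((2 * E / 3 : ℝ) : ℂ) * (Ψ x).1 - (κ x : ℂ) * (Ψ x).2 := by
      push_cast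
      linear_combination (2 / 3 * I) * e1 +
        (deriv (fun y => (Ψ y).2) x + (κ x : ℂ) * (Ψ x).2) * Complex.I_sq
    exact this ▸ h2.hasDerivAt

lemma main_lemma (κ : ℝ → ℝ) (B ω x₀ δ C₁ C₂ : ℝ) (hδ : 0 < δ)
    (hκbd : ∀ x, |κ x| ≤ B)
    (hκ : ∀ x, x₀ ≤ x → |ω| + δ ≤ κ x)
    (u₁ v₁ u₂ v₂ : ℝ → ℂ)
    (hu₁ : ∀ x, HasDerivAt u₁ ((κ x : ℂ) * u₁ x + I * (ω : ℂ) * v₁ x) x)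
    (hv₁ : ∀ x, HasDerivAt v₁ (I * (ω : ℂ) * u₁ x - (κ x : ℂ) * v₁ x) x)
    (hu₂ : ∀ x, HasDerivAt u₂ ((κ x : ℂ) * u₂ x + I * (ω : ℂ) * v₂ x) x)
    (hv₂ : ∀ x, HasDerivAt v₂ (I * (ω : ℂ) * u₂ x - (κ x : ℂ) * v₂ x) x)
    (hb₁ : ∀ x, ‖u₁ x‖ ≤ C₁) (hb₂ : ∀ x, ‖u₂ x‖ ≤ C₂) :
    ∃ c₁ c₂ : ℂ, ¬(c₁ = 0 ∧ c₂ = 0) ∧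
      ∀ x, c₁ * u₁ x + c₂ * u₂ x = 0 ∧ c₁ * v₁ x + c₂ * v₂ x = 0 := by
  -- derivative facts for combinations
  have hU : ∀ (c₁ c₂ : ℂ) (x : ℝ), HasDerivAt (fun y => c₁ * u₁ y + c₂ * u₂ y)
      ((κ x : ℂ) * (c₁ * u₁ x + c₂ * u₂ x) + I * (ω : ℂ) * (c₁ * v₁ x + c₂ * v₂ x)) x := by
    intro c₁ c₂ x
    have := ((hu₁ x).const_mul c₁).add ((hu₂ x).const_mul c₂)
    refine this.congr_deriv ?_
    ring
  have hV : ∀ (c₁ c₂ : ℂ) (x : ℝ), HasDerivAt (fun y => c₁ * v₁ y + c₂ * v₂ y)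
      (I * (ω : ℂ) * (c₁ * u₁ x + c₂ * u₂ x) - (κ x : ℂ) * (c₁ * v₁ x + c₂ * v₂ x)) x := by
    intro c₁ c₂ x
    have := ((hv₁ x).const_mul c₁).add ((hv₂ x).const_mul c₂)
    refine this.congr_deriv ?_
    ring
  set a1 := u₁ x₀; set a2 := v₁ x₀; set b1 := u₂ x₀; set b2 := v₂ x₀
  by_cases hd : a1 * b2 - a2 * b1 = 0
  · -- dependent initial data: produce explicit relation
    obtain ⟨c₁, c₂, hc, hz1, hz2⟩ :
        ∃ c₁ c₂ : ℂ, ¬(c₁ = 0 ∧ c₂ = 0) ∧ c₁ * a1 + c₂ * b1 = 0 ∧ c₁ * a2 + c₂ * b2 = 0 := by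
      by_cases ha1 : a1 = 0
      · by_cases ha2 : a2 = 0
        · exact ⟨1, 0, by simp, by simp [ha1], by simp [ha2]⟩
        · refine ⟨-b2, a2, fun h => ha2 h.2, ?_, by ring⟩
          linear_combination -hd
      · refine ⟨-b1, a1, fun h => ha1 h.2, by ring, ?_⟩
        linear_combination hd
    refine ⟨c₁, c₂, hc, fun x => ?_⟩
    exact dirac_unique κ B ω x₀ hκbd _ _ (hU c₁ c₂) (hV c₁ c₂) hz1 hz2 x
  · -- independent initial data: contradiction
    exfalso
    set d := a1 * b2 - a2 * b1
    set c₁ := b2 / d; set c₂ := -a2 / d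
    set U : ℝ → ℂ := fun y => c₁ * u₁ y + c₂ * u₂ y with hUdef
    set V : ℝ → ℂ := fun y => c₁ * v₁ y + c₂ * v₂ y with hVdef
    have hU0 : U x₀ = 1 := by
      simp only [hUdef, c₁, c₂]
      field_simp
      ring
    have hV0 : V x₀ = 0 := by
      simp only [hVdef, c₁, c₂]
      field_simp
      ring
    set p : ℝ → ℝ := fun y => (U y).re with hpdef
    set q : ℝ → ℝ := fun y => (V y).im with hqdef
    have hp : ∀ x, HasDerivAt p (κ x * p x - ω * q x) x := by
      intro x
      have := hasDerivAt_re (hU c₁ c₂ x)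
      convert this using 1
      simp [Complex.mul_re, Complex.mul_im, hUdef, hVdef, hpdef, hqdef]
      try ring
    have hq : ∀ x, HasDerivAt q (ω * p x - κ x * q x) x := by
      intro x
      have := hasDerivAt_im (hV c₁ c₂ x)
      convert this using 1
      simp [Complex.mul_re, Complex.mul_im, hUdef, hVdef, hpdef, hqdef]
      try ring
    have hbd : ∀ x, p x ^ 2 ≤ (‖c₁‖ * C₁ + ‖c₂‖ * C₂) ^ 2 := by
      intro x
      have h1 : |p x| ≤ ‖c₁‖ * C₁ + ‖c₂‖ * C₂ := by
        calc |p x| ≤ ‖U x‖ := Complex.abs_re_le_norm _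
          _ ≤ ‖c₁ * u₁ x‖ + ‖c₂ * u₂ x‖ := norm_add_le _ _
          _ ≤ ‖c₁‖ * C₁ + ‖c₂‖ * C₂ := by
              simp only [norm_mul]
              gcongr
              · exact hb₁ x
              · exact hb₂ x
      calc p x ^ 2 = |p x| ^ 2 := (_root_.sq_abs _).symm
        _ ≤ (‖c₁‖ * C₁ + ‖c₂‖ * C₂) ^ 2 :=
            pow_le_pow_left₀ (abs_nonneg _) h1 2
    refine growth_contradiction κ ω x₀ δ _ hδ hκ p q hp hq hbd ?_
    simp [hpdef, hqdef, hU0, hV0]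

/-- For bounded continuous `κ` with nonzero limits at `±∞` (with `L¹`
convergence to its limits) and `E` in the spectral gap, the space of bounded `C¹` solutions of
`𝒟Ψ = EΨ` has dimension at most one: any two such solutions are linearly dependent over `ℂ`.
In particular, every eigenvalue of `𝒟` in the spectral gap is simple. -/
theorem gap_eigenvalues_are_simple
    (κ : ℝ → ℝ) (hκcont : Continuous κ) (hκbd : ∃ B : ℝ, ∀ x, |κ x| ≤ B)
    (κp κm : ℝ)
    (hp : Tendsto κ atTop (nhds κp)) (hm : Tendsto κ atBot (nhds κm))
    (hp0 : κp ≠ 0) (hm0 : κm ≠ 0)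
    (hintp : IntegrableOn (fun x => κ x - κp) (Set.Ici 0))
    (hintm : IntegrableOn (fun x => κ x - κm) (Set.Iic 0))
    (E : ℝ) (hE : |E| < (3 / 2) * min |κp| |κm|)
    (Ψ₁ Ψ₂ : ℝ → ℂ × ℂ)
    (h1smooth : ContDiff ℝ 1 Ψ₁) (h2smooth : ContDiff ℝ 1 Ψ₂)
    (h1bd : ∃ B : ℝ, ∀ x, ‖Ψ₁ x‖ ≤ B) (h2bd : ∃ B : ℝ, ∀ x, ‖Ψ₂ x‖ ≤ B)
    (h1eq : DiracEq κ E Ψ₁) (h2eq : DiracEq κ E Ψ₂) :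
    ∃ c₁ c₂ : ℂ, ¬(c₁ = 0 ∧ c₂ = 0) ∧ ∀ x : ℝ, c₁ • Ψ₁ x + c₂ • Ψ₂ x = 0 := by
  obtain ⟨B, hB⟩ := hκbd
  obtain ⟨C₁, hC₁⟩ := h1bd
  obtain ⟨C₂, hC₂⟩ := h2bd
  set ω : ℝ := 2 * E / 3 with hωdef
  have hω : |ω| < |κp| := by
    have h1 : (3 / 2 : ℝ) * min |κp| |κm| ≤ (3 / 2) * |κp| :=
      by gcongr; exact min_le_left _ _
    have h2 : |ω| = 2 / 3 * |E| := by
      rw [hωdef, abs_div, abs_mul]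
      simp [abs_of_nonneg]
      ring
    nlinarith [abs_nonneg E]
  obtain ⟨δ, hδ, hκpδ⟩ : ∃ δ : ℝ, 0 < δ ∧ |κp| = |ω| + 2 * δ :=
    ⟨(|κp| - |ω|) / 2, by linarith, by ring⟩
  rcases hp0.lt_or_gt with hneg | hpos
  · -- κp < 0 : use swapped components with -κ
    have habs : |κp| = -κp := abs_of_neg hneg
    have hev : ∀ᶠ x in atTop, κ x < -(|ω| + δ) := by
      apply hp.eventually (eventually_lt_nhds ?_)
      rw [habs] at hκpδ
      linarith
    obtain ⟨x₀, hx₀⟩ := eventually_atTop.mp hev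
    obtain ⟨c₁, c₂, hc, hsol⟩ := main_lemma (fun x => -κ x) B ω x₀ δ C₁ C₂ hδ
      (fun x => by simpa using hB x)
      (fun x hx => by have := hx₀ x hx; linarith)
      (fun x => (Ψ₁ x).2) (fun x => (Ψ₁ x).1) (fun x => (Ψ₂ x).2) (fun x => (Ψ₂ x).1)
      (fun x => by
        have := (dirac_deriv κ E Ψ₁ h1smooth h1eq x).2
        convert this using 1
        push_cast [hωdef]
        ring)
      (fun x => by
        have := (dirac_deriv κ E Ψ₁ h1smooth h1eq x).1
        convert this using 1
        push_cast [hωdef]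
        ring)
      (fun x => by
        have := (dirac_deriv κ E Ψ₂ h2smooth h2eq x).2
        convert this using 1
        push_cast [hωdef]
        ring)
      (fun x => by
        have := (dirac_deriv κ E Ψ₂ h2smooth h2eq x).1
        convert this using 1
        push_cast [hωdef]
        ring)
      (fun x => le_trans (norm_snd_le (Ψ₁ x)) (hC₁ x))
      (fun x => le_trans (norm_snd_le (Ψ₂ x)) (hC₂ x))
    refine ⟨c₁, c₂, hc, fun x => ?_⟩
    obtain ⟨hz2, hz1⟩ := hsol x
    apply Prod.ext <;> simp [Prod.fst_add, Prod.snd_add, smul_eq_mul, hz1, hz2]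
  · -- κp > 0
    have habs : |κp| = κp := abs_of_pos hpos
    have hev : ∀ᶠ x in atTop, |ω| + δ < κ x := by
      apply hp.eventually (eventually_gt_nhds ?_)
      rw [habs] at hκpδ
      linarith
    obtain ⟨x₀, hx₀⟩ := eventually_atTop.mp hev
    obtain ⟨c₁, c₂, hc, hsol⟩ := main_lemma κ B ω x₀ δ C₁ C₂ hδ hB
      (fun x hx => (hx₀ x hx).le)
      (fun x => (Ψ₁ x).1) (fun x => (Ψ₁ x).2) (fun x => (Ψ₂ x).1) (fun x => (Ψ₂ x).2)
      (fun x => by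
        have := (dirac_deriv κ E Ψ₁ h1smooth h1eq x).1
        convert this using 1)
      (fun x => by
        have := (dirac_deriv κ E Ψ₁ h1smooth h1eq x).2
        convert this using 1)
      (fun x => by
        have := (dirac_deriv κ E Ψ₂ h2smooth h2eq x).1
        convert this using 1)
      (fun x => by
        have := (dirac_deriv κ E Ψ₂ h2smooth h2eq x).2
        convert this using 1)
      (fun x => le_trans (norm_fst_le (Ψ₁ x)) (hC₁ x))
      (fun x => le_trans (norm_fst_le (Ψ₂ x)) (hC₂ x))
    refine ⟨c₁, c₂, hc, fun x => ?_⟩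
    obtain ⟨hz1, hz2⟩ := hsol x
    apply Prod.ext <;> simp [Prod.fst_add, Prod.snd_add, smul_eq_mul, hz1, hz2]
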